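/- arXiv:2110.02942 — 2 statements merged into one kernel-verified Lean document; each statement's English description precedes it below -/
import Mathlib

section
/- Let G be a finite group and A = A⁻¹ a symmetric subset of G. Then for every integer k ≥ 3, |A^k|/|A| ≤ (|A³|/|A|)^(k-2), i.e. |A^k| · |A|^(k-3) ≤ |A³|^(k-2). -/
open Pointwise

/-- Ruzsa's tripling inequality: for a symmetric subset `A` of a finite group `G`
and `k ≥ 3`, `|A^k| · |A|^(k-3) ≤ (|A³|)^(k-2)`. -/
theorem stmt_0 (G : Type*) [Group G] [Fintype G] [DecidableEq G]
    (A : Finset G) (hsym : A⁻¹ = A) (k : ℕ) (hk : 3 ≤ k) :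
    (A ^ k).card * A.card ^ (k - 3) ≤ (A ^ 3).card ^ (k - 2) := by
  rcases A.eq_empty_or_nonempty with rfl | hA
  · simp [Finset.empty_pow (by omega : k ≠ 0)]
  have hApos : (0:ℝ) < A.card := by exact_mod_cast hA.card_pos
  have key : ((A ^ k).card : ℝ) ≤ (((A ^ 3).card : ℝ) / A.card) ^ (k - 2) * A.card :=
    Finset.small_pow_of_small_tripling hk (by rw [div_mul_cancel₀]; exact hApos.ne') hsym
  have hcast : (((A ^ k).card * A.card ^ (k - 3) : ℕ) : ℝ) ≤ (((A ^ 3).card ^ (k - 2) : ℕ) : ℝ) := by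
    push_cast
    have hk2 : k - 2 = (k - 3) + 1 := by omega
    rw [div_pow] at key
    have h := mul_le_mul_of_nonneg_right key (by positivity : (0:ℝ) ≤ (A.card:ℝ) ^ (k - 3))
    calc ((A ^ k).card : ℝ) * (A.card:ℝ) ^ (k - 3) ≤ ((A ^ 3).card:ℝ) ^ (k-2) / (A.card:ℝ)^(k-2) * A.card * (A.card:ℝ)^(k-3) := h
      _ = ((A ^ 3).card:ℝ) ^ (k-2) := by
          rw [hk2]; field_simp; ring
  exact_mod_cast hcast
end

section
/- Let G be a finite group and A a generating set of G containing the identity. Then either A³ = G or |A³| ≥ 2|A|. -/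
open Pointwise

namespace OlsonAux

open Finset

variable {G : Type*} [Group G] [Fintype G] [DecidableEq G]

lemma pow_mono (A : Finset G) (he : (1:G) ∈ A) {m n : ℕ} (h : m ≤ n) :
    A ^ m ⊆ A ^ n := by
  induction n, h using Nat.le_induction with
  | base => exact Finset.Subset.refl _
  | succ n hmn ih =>
      refine ih.trans ?_
      rw [pow_succ]
      exact Finset.subset_mul_left _ he

lemma exists_pow_univ (A : Finset G) (he : (1:G) ∈ A)
    (hgen : Subgroup.closure (A : Set G) = ⊤) :
    ∃ n, A ^ n = (univ : Finset G) := by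
  have hmem : ∀ g : G, ∃ n, g ∈ A ^ n := by
    intro g
    have hg : g ∈ Subgroup.closure (A : Set G) := hgen ▸ Subgroup.mem_top g
    induction hg using Subgroup.closure_induction with
    | mem x hx => exact ⟨1, by rw [pow_one]; exact Finset.mem_coe.mp hx⟩
    | one => exact ⟨0, by simp⟩
    | mul x y hx hy ihx ihy =>
        obtain ⟨n, hn⟩ := ihx
        obtain ⟨m, hm⟩ := ihy
        exact ⟨n + m, by rw [pow_add]; exact Finset.mul_mem_mul hn hm⟩
    | inv x hx ih =>
        obtain ⟨n, hn⟩ := ih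
        have hp : ∀ k : ℕ, x ^ k ∈ A ^ (n * k) := by
          intro k
          induction k with
          | zero => simp
          | succ k ihk =>
              have hnk : n * (k+1) = n * k + n := by ring
              rw [hnk, pow_add, pow_succ]
              exact Finset.mul_mem_mul ihk hn
        have ho : 0 < orderOf x := orderOf_pos x
        have hxx : x * x ^ (orderOf x - 1) = 1 := by
          rw [← pow_succ']
          have h1 : orderOf x - 1 + 1 = orderOf x := by omega
          rw [h1, pow_orderOf_eq_one]
        exact ⟨n * (orderOf x - 1), by rw [inv_eq_of_mul_eq_one_right hxx]; exact hp _⟩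
  refine ⟨univ.sup fun g => Nat.find (hmem g), Finset.eq_univ_iff_forall.mpr fun g => ?_⟩
  exact pow_mono A he (Finset.le_sup (mem_univ g)) (Nat.find_spec (hmem g))

/-- Strict growth for "good" sets. -/
lemma card_lt_of_good (A : Finset G) (he : (1:G) ∈ A)
    (hgen : Subgroup.closure (A : Set G) = ⊤) {X : Finset G} (hne : X.Nonempty)
    (hXA : X * A ≠ univ) : X.card + 1 ≤ (X * A).card := by
  obtain ⟨n, hn⟩ := exists_pow_univ A he hgen
  by_contra h
  push_neg at h
  have hsub : X ⊆ X * A := Finset.subset_mul_left X he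
  have heq : X = X * A := Finset.eq_of_subset_of_card_le hsub (by omega)
  have hk : ∀ k, X * A ^ k = X := by
    intro k
    induction k with
    | zero => simp
    | succ k ih => rw [pow_succ, ← mul_assoc, ih, ← heq]
  have h1 : X * A ^ n = X := hk n
  rw [hn] at h1
  have h2 : (univ : Finset G) ⊆ X * univ := by
    intro g _
    obtain ⟨x, hx⟩ := hne
    exact Finset.mem_mul.mpr ⟨x, hx, x⁻¹ * g, mem_univ _, by group⟩
  have hXu : X = univ := by
    refine Finset.eq_univ_iff_forall.mpr fun g => ?_
    have := h2 (mem_univ g)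
    rwa [h1] at this
  apply hXA
  rw [← heq, hXu]

/-- The connectivity of the Cayley graph of `B`. -/
noncomputable def kap (B : Finset G) : ℕ :=
  sInf {k | ∃ X : Finset G, X.Nonempty ∧ X * B ≠ univ ∧ (X * B).card = X.card + k}

/-- The cardinality of an atom. -/
noncomputable def acard (B : Finset G) : ℕ :=
  sInf {m | ∃ X : Finset G,
    X.Nonempty ∧ X * B ≠ univ ∧ (X * B).card = X.card + kap B ∧ X.card = m}

lemma kap_le {B X : Finset G} (hb : (1:G) ∈ B) (hne : X.Nonempty) (hXB : X * B ≠ univ) :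
    X.card + kap B ≤ (X * B).card := by
  have hsub : X ⊆ X * B := Finset.subset_mul_left X hb
  have hc : X.card ≤ (X * B).card := card_le_card hsub
  have hmem : ∃ Y : Finset G, Y.Nonempty ∧ Y * B ≠ univ ∧
      (Y * B).card = Y.card + ((X * B).card - X.card) := ⟨X, hne, hXB, by omega⟩
  have : kap B ≤ (X * B).card - X.card := Nat.sInf_le hmem
  omega

lemma kap_spec (B : Finset G) (hb : (1:G) ∈ B) (hU : B ≠ univ) :
    ∃ X : Finset G, X.Nonempty ∧ X * B ≠ univ ∧ (X * B).card = X.card + kap B := by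
  have hmem : kap B ∈ {k | ∃ X : Finset G,
      X.Nonempty ∧ X * B ≠ univ ∧ (X * B).card = X.card + k} := by
    apply Nat.sInf_mem
    refine ⟨B.card - 1, (1 : Finset G), ⟨1, Finset.one_mem_one⟩, by rwa [one_mul], ?_⟩
    rw [one_mul]
    have h1 : 1 ≤ B.card := card_pos.mpr ⟨1, hb⟩
    have h2 : (1 : Finset G).card = 1 := Finset.card_one
    omega
  exact hmem

lemma acard_spec (B : Finset G) (hb : (1:G) ∈ B) (hU : B ≠ univ) :
    ∃ X : Finset G,
      X.Nonempty ∧ X * B ≠ univ ∧ (X * B).card = X.card + kap B ∧ X.card = acard B := by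
  obtain ⟨X, h1, h2, h3⟩ := kap_spec B hb hU
  have hmem : acard B ∈ {m | ∃ X : Finset G,
      X.Nonempty ∧ X * B ≠ univ ∧ (X * B).card = X.card + kap B ∧ X.card = m} := by
    apply Nat.sInf_mem
    exact ⟨X.card, X, h1, h2, h3, rfl⟩
  exact hmem

lemma acard_le {B X : Finset G} (hne : X.Nonempty) (hXB : X * B ≠ univ)
    (hc : (X * B).card = X.card + kap B) : acard B ≤ X.card :=
  Nat.sInf_le ⟨X, hne, hXB, hc, rfl⟩

/-- Duality: the complement of `X * A` is a good set for `A⁻¹` with no larger deficiency. -/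
lemma dual {A X : Finset G} (hne : X.Nonempty) (hXA : X * A ≠ univ) :
    (univ \ (X * A)).Nonempty ∧ (univ \ (X * A)) * A⁻¹ ≠ univ ∧
      ((univ \ (X * A)) * A⁻¹).card + X.card ≤ (univ \ (X * A)).card + (X * A).card := by
  set Z := univ \ (X * A) with hZ
  have hZne : Z.Nonempty := by
    rw [hZ, sdiff_nonempty]
    intro h
    exact hXA (univ_subset_iff.mp h)
  have hsub : Z * A⁻¹ ⊆ univ \ X := by
    intro g hg
    obtain ⟨z, hz, b, hbinv, rfl⟩ := Finset.mem_mul.mp hg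
    have hb : b⁻¹ ∈ A := Finset.mem_inv'.mp hbinv
    rw [mem_sdiff]
    refine ⟨mem_univ _, fun hmem => ?_⟩
    have hzX : z ∈ X * A := Finset.mem_mul.mpr ⟨z * b, hmem, b⁻¹, hb, by group⟩
    rw [hZ, mem_sdiff] at hz
    exact hz.2 hzX
  refine ⟨hZne, ?_, ?_⟩
  · intro h
    obtain ⟨x, hx⟩ := hne
    have hxm : x ∈ univ \ X := hsub (h ▸ mem_univ x)
    rw [mem_sdiff] at hxm
    exact hxm.2 hx
  · have h1 : (Z * A⁻¹).card ≤ (univ \ X).card := card_le_card hsub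
    have h2 : (univ \ X).card + X.card = (univ : Finset G).card :=
      card_sdiff_add_card_eq_card (subset_univ X)
    have h3 : Z.card + (X * A).card = (univ : Finset G).card :=
      card_sdiff_add_card_eq_card (subset_univ _)
    omega

lemma kap_inv (A : Finset G) (he : (1:G) ∈ A) (hU : A ≠ univ) : kap A⁻¹ = kap A := by
  have key : ∀ B : Finset G, (1:G) ∈ B → B ≠ univ → kap B⁻¹ ≤ kap B := by
    intro B hb hbU
    obtain ⟨X, h1, h2, h3⟩ := kap_spec B hb hbU
    obtain ⟨hZne, hZU, hZcard⟩ := dual h1 h2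
    set Z := univ \ (X * B)
    have hbinv : (1:G) ∈ B⁻¹ := by rw [Finset.mem_inv']; simpa
    have hsub : Z ⊆ Z * B⁻¹ := Finset.subset_mul_left Z hbinv
    have hc : Z.card ≤ (Z * B⁻¹).card := card_le_card hsub
    have hle : kap B⁻¹ ≤ (Z * B⁻¹).card - Z.card :=
      Nat.sInf_le ⟨Z, hZne, hZU, by omega⟩
    omega
  have h1 := key A he hU
  have h2 := key A⁻¹ (by rw [Finset.mem_inv']; simpa) (by
    intro h
    apply hU
    have h' := congrArg (·⁻¹) h
    simpa using h')
  rw [inv_inv] at h2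
  omega

lemma main (A : Finset G) (he : (1:G) ∈ A) (hgen : Subgroup.closure (A : Set G) = ⊤)
    (h3 : A ^ 3 ≠ univ) (hwlog : acard A ≤ acard A⁻¹) :
    2 * A.card ≤ (A ^ 3).card := by
  have hA3 : A ^ 3 = (A * A) * A := by rw [pow_succ, sq]
  have hAne : A.Nonempty := ⟨1, he⟩
  have hA2U : A * A ≠ univ := by
    intro h
    apply h3
    apply univ_subset_iff.mp
    rw [hA3, ← h]
    exact Finset.subset_mul_left _ he
  have hAU : A ≠ univ := by
    intro h
    apply hA2U
    have hs : (univ : Finset G) ⊆ A * A := by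
      rw [← h]
      exact Finset.subset_mul_left _ he
    exact univ_subset_iff.mp hs
  have hκpos : 1 ≤ kap A := by
    obtain ⟨X, h1, h2, hc⟩ := kap_spec A he hAU
    have := card_lt_of_good A he hgen h1 h2
    omega
  obtain ⟨X₀, hX₀ne, hX₀U, hX₀c, hX₀a⟩ := acard_spec A he hAU
  obtain ⟨x₀, hx₀⟩ := hX₀ne
  set H : Finset G := {x₀⁻¹} * X₀ with hH
  have hHcard : H.card = acard A := by rw [hH, Finset.card_singleton_mul]; exact hX₀a
  have h1H : (1:G) ∈ H := by
    rw [hH]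
    exact Finset.mem_mul.mpr ⟨x₀⁻¹, mem_singleton_self _, x₀, hx₀, inv_mul_cancel x₀⟩
  have hHne : H.Nonempty := ⟨1, h1H⟩
  have hHA : H * A = {x₀⁻¹} * (X₀ * A) := by rw [hH, mul_assoc]
  have hHAcard : (H * A).card = acard A + kap A := by
    rw [hHA, Finset.card_singleton_mul, hX₀c, hX₀a]
  have hHU : H * A ≠ univ := by
    intro h
    apply hX₀U
    have hc := congrArg Finset.card h
    rw [hHA, Finset.card_singleton_mul] at hc
    apply (Finset.card_eq_iff_eq_univ _).mp
    rw [hc, card_univ]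
  -- every left translate of `H` by an element of `H` is `H` itself
  have hclaim : ∀ h ∈ H, {h} * H = H := by
    intro h hh
    set Y := {h} * H with hY
    have hYcard : Y.card = acard A := by rw [hY, Finset.card_singleton_mul, hHcard]
    have hYA : Y * A = {h} * (H * A) := by rw [hY, mul_assoc]
    have hYAcard : (Y * A).card = acard A + kap A := by
      rw [hYA, Finset.card_singleton_mul, hHAcard]
    have hYne : Y.Nonempty :=
      ⟨h * 1, Finset.mem_mul.mpr ⟨h, mem_singleton_self _, 1, h1H, rfl⟩⟩
    have hYU : Y * A ≠ univ := by
      intro hYu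
      apply hHU
      have hc := congrArg Finset.card hYu
      rw [hYA, Finset.card_singleton_mul] at hc
      apply (Finset.card_eq_iff_eq_univ _).mp
      rw [hc, card_univ]
    have hinterm : h ∈ H ∩ Y :=
      mem_inter.mpr ⟨hh, Finset.mem_mul.mpr ⟨h, mem_singleton_self _, 1, h1H, mul_one h⟩⟩
    have hIne : (H ∩ Y).Nonempty := ⟨h, hinterm⟩
    have hIU : (H ∩ Y) * A ≠ univ := by
      intro hu
      apply hHU
      apply univ_subset_iff.mp
      rw [← hu]
      exact Finset.mul_subset_mul_right inter_subset_left
    have hIlow : (H ∩ Y).card + kap A ≤ ((H ∩ Y) * A).card := kap_le he hIne hIU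
    have hIcard : ((H ∩ Y) * A).card ≤ ((H * A) ∩ (Y * A)).card :=
      card_le_card Finset.inter_mul_subset
    have hunion : (H ∪ Y) * A = (H * A) ∪ (Y * A) := Finset.union_mul
    have hcards : ((H * A) ∩ (Y * A)).card + ((H * A) ∪ (Y * A)).card
        = (H * A).card + (Y * A).card := card_inter_add_card_union _ _
    have hHYcard : (H ∩ Y).card + (H ∪ Y).card = H.card + Y.card :=
      card_inter_add_card_union _ _
    by_cases hcase : (H ∪ Y) * A = univ
    · -- bad case : impossible thanks to the duality and `hwlog`
      exfalso
      have hGcard : ((H * A) ∪ (Y * A)).card = Fintype.card G := by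
        rw [← hunion, hcase, card_univ]
      obtain ⟨hZne, hZU, hZineq⟩ := dual hHne hHU
      set Z := univ \ (H * A) with hZ
      have hbinv : (1:G) ∈ A⁻¹ := by rw [Finset.mem_inv']; simpa
      have hZsub : Z ⊆ Z * A⁻¹ := Finset.subset_mul_left Z hbinv
      have hZc : Z.card ≤ (Z * A⁻¹).card := card_le_card hZsub
      have hkapinv : kap A⁻¹ = kap A := kap_inv A he hAU
      have hlow : Z.card + kap A⁻¹ ≤ (Z * A⁻¹).card := kap_le hbinv hZne hZU
      have hexact : (Z * A⁻¹).card = Z.card + kap A⁻¹ := by omega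
      have hαZ : acard A⁻¹ ≤ Z.card := acard_le hZne hZU hexact
      have hZtot : Z.card + (H * A).card = Fintype.card G := by
        rw [hZ]
        have hcs := card_sdiff_add_card_eq_card (subset_univ (H * A))
        rwa [card_univ] at hcs
      have h1I : 1 ≤ (H ∩ Y).card := card_pos.mpr hIne
      omega
    · -- good case : submodularity forces `H ∩ Y` to be an atom, hence `H = Y`
      have hUne : (H ∪ Y).Nonempty := ⟨1, mem_union_left _ h1H⟩
      have hUlow : (H ∪ Y).card + kap A ≤ ((H ∪ Y) * A).card := kap_le he hUne hcase
      have hUcard : ((H ∪ Y) * A).card = ((H * A) ∪ (Y * A)).card := by rw [hunion]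
      have hIeq : ((H ∩ Y) * A).card = (H ∩ Y).card + kap A := by omega
      have hαI : acard A ≤ (H ∩ Y).card := acard_le hIne hIU hIeq
      have hIH : H ∩ Y = H :=
        Finset.eq_of_subset_of_card_le inter_subset_left (by omega)
      have hHsubY : H ⊆ Y := by rw [← hIH]; exact inter_subset_right
      exact (Finset.eq_of_subset_of_card_le hHsubY (by omega)).symm
  -- `H` is closed under multiplication
  have hmul : ∀ x ∈ H, ∀ y ∈ H, x * y ∈ H := by
    intro x hx y hy
    rw [← hclaim x hx]
    exact Finset.mem_mul.mpr ⟨x, mem_singleton_self _, y, hy, rfl⟩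
  -- `H` is closed under inverses
  have hinv : ∀ x ∈ H, x⁻¹ ∈ H := by
    intro x hx
    have hpow : ∀ k : ℕ, x ^ (k + 1) ∈ H := by
      intro k
      induction k with
      | zero => simpa using hx
      | succ k ih => rw [pow_succ]; exact hmul _ ih _ hx
    by_cases h1 : orderOf x = 1
    · have hx1 : x = 1 := orderOf_eq_one_iff.mp h1
      rw [hx1]
      simpa using h1H
    · have ho : 0 < orderOf x := orderOf_pos x
      have h2 : 2 ≤ orderOf x := by omega
      have hxx : x * x ^ (orderOf x - 1) = 1 := by
        rw [← pow_succ']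
        have hth : orderOf x - 1 + 1 = orderOf x := by omega
        rw [hth, pow_orderOf_eq_one]
      rw [inv_eq_of_mul_eq_one_right hxx]
      have hp := hpow (orderOf x - 2)
      have he2 : orderOf x - 2 + 1 = orderOf x - 1 := by omega
      rwa [he2] at hp
  -- some element of `A` lies outside `H`
  have hex : ∃ a ∈ A, a ∉ H := by
    by_contra hcon
    push_neg at hcon
    have hsub2 : H * A ⊆ H := by
      intro g hg
      obtain ⟨u, hu, v, hv, rfl⟩ := Finset.mem_mul.mp hg
      exact hmul u hu v (hcon v hv)
    have := card_le_card hsub2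
    omega
  obtain ⟨a, haA, haH⟩ := hex
  have hdisj : Disjoint H (H * {a}) := by
    refine Finset.disjoint_left.mpr ?_
    intro g hgH hgHa
    obtain ⟨u, hu, v, hv, rfl⟩ := Finset.mem_mul.mp hgHa
    rw [mem_singleton] at hv
    subst hv
    apply haH
    have := hmul _ (hinv u hu) _ hgH
    simpa using this
  have hsubU : H ∪ H * {a} ⊆ H * A := by
    apply union_subset
    · exact Finset.subset_mul_left H he
    · exact Finset.mul_subset_mul_left (singleton_subset_iff.mpr haA)
  have hcard2 : 2 * acard A ≤ acard A + kap A := by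
    have h1 : (H ∪ H * {a}).card = H.card + (H * {a}).card := card_union_of_disjoint hdisj
    have h2 : (H * {a}).card = H.card := Finset.card_mul_singleton H a
    have h3 : (H ∪ H * {a}).card ≤ (H * A).card := card_le_card hsubU
    omega
  have hAsub : A ⊆ H * A := Finset.subset_mul_right A h1H
  have hAcard : A.card ≤ acard A + kap A := by
    rw [← hHAcard]
    exact card_le_card hAsub
  have c1 : A.card + kap A ≤ (A * A).card := kap_le he hAne hA2U
  have hA2ne : (A * A).Nonempty := hAne.mul hAne
  have hA3U : (A * A) * A ≠ univ := by rw [← hA3]; exact h3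
  have c2 : (A * A).card + kap A ≤ ((A * A) * A).card := kap_le he hA2ne hA3U
  rw [hA3]
  omega

end OlsonAux

/-- Olson's theorem: if `A` generates the finite group `G` and contains the identity,
then either `A³ = G` or `|A³| ≥ 2|A|`. -/
theorem stmt_1 (G : Type*) [Group G] [Fintype G] [DecidableEq G]
    (A : Finset G) (he : (1 : G) ∈ A) (hgen : Subgroup.closure (A : Set G) = ⊤) :
    A ^ 3 = Finset.univ ∨ 2 * A.card ≤ (A ^ 3).card := by
  by_cases h3 : A ^ 3 = Finset.univ
  · exact Or.inl h3
  right
  by_cases hwlog : OlsonAux.acard A ≤ OlsonAux.acard A⁻¹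
  · exact OlsonAux.main A he hgen h3 hwlog
  · have he' : (1:G) ∈ A⁻¹ := by rw [Finset.mem_inv']; simpa
    have hgen' : Subgroup.closure ((A⁻¹ : Finset G) : Set G) = ⊤ := by
      rw [Finset.coe_inv, Subgroup.closure_inv]
      exact hgen
    have h3' : (A⁻¹ : Finset G) ^ 3 ≠ Finset.univ := by
      rw [inv_pow]
      intro h
      apply h3
      have h' := congrArg (·⁻¹) h
      simpa using h'
    have hwlog' : OlsonAux.acard A⁻¹ ≤ OlsonAux.acard (A⁻¹)⁻¹ := by
      rw [inv_inv]
      exact le_of_not_ge hwlog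
    have hmain := OlsonAux.main A⁻¹ he' hgen' h3' hwlog'
    rwa [Finset.card_inv, inv_pow, Finset.card_inv] at hmain
end
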